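/- For every m ≥ 1, Sym²(Ψ_m)·Sym²(Ψ_{m−1})⋯Sym²(Ψ_1) = Sym²([[B_m, κ_2 B_{m−1}^{(1)}/(t − θ^q)],[B_{m−1}, κ_2 B_{m−2}^{(1)}/(t − θ^q)]]); this is the case T_E = Sym² of the product formula for twisted inverses of the σ-matrix of φ. -/

import Mathlib

open Matrix

/-- The symmetric square of a `2 × 2` matrix: the `3 × 3` matrix representing the induced
map on the symmetric square with respect to the basis of symmetrized tensors. -/
def sym2Matrix {R : Type*} [CommRing R] (M : Matrix (Fin 2) (Fin 2) R) :
    Matrix (Fin 3) (Fin 3) R :=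
  !![M 0 0 ^ 2, 2 * (M 0 0 * M 0 1), M 0 1 ^ 2;
     M 0 0 * M 1 0, M 0 0 * M 1 1 + M 0 1 * M 1 0, M 0 1 * M 1 1;
     M 1 0 ^ 2, 2 * (M 1 0 * M 1 1), M 1 1 ^ 2]

theorem sym2Matrix_mul' {R : Type*} [CommRing R] (A B : Matrix (Fin 2) (Fin 2) R) :
    sym2Matrix (A * B) = sym2Matrix A * sym2Matrix B := by
  ext i j
  fin_cases i <;> fin_cases j <;>
    simp [sym2Matrix, Matrix.mul_apply, Fin.sum_univ_succ] <;> ring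

/-- **Symmetric squares of products of twisted inverses of the σ-matrix.**
Over `K(t)` with `K = 𝔽_q(θ)` of odd characteristic, for the rank-2 Drinfeld module
`φ_t = θ + κ₁τ + κ₂τ²`, for every `m ≥ 1` one has
`Sym²(Ψ_m)·Sym²(Ψ_{m-1})⋯Sym²(Ψ_1)
  = Sym²([[B_m, κ₂B_{m-1}^{(1)}/(t-θ^q)], [B_{m-1}, κ₂B_{m-2}^{(1)}/(t-θ^q)]])`:
the case `T_E = Sym²` of the product formula for twisted inverses of the σ-matrix. -/
theorem prod_sym2_twistedInv_sigmaMatrix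
    (p : ℕ) [Fact p.Prime] (hp : p ≠ 2)
    (Fq : Type) [Field Fq] [Fintype Fq] [CharP Fq p]
    (q : ℕ) (hq : q = Fintype.card Fq)
    (κ₁ : Polynomial Fq) (κ₂ : Fqˣ)
    (t θ' k1 k2 : RatFunc (RatFunc Fq))
    (ht : t = RatFunc.X)
    (hθ' : θ' = algebraMap (RatFunc Fq) (RatFunc (RatFunc Fq)) RatFunc.X)
    (hk1 : k1 = algebraMap (RatFunc Fq) (RatFunc (RatFunc Fq))
      (algebraMap (Polynomial Fq) (RatFunc Fq) κ₁))
    (hk2 : k2 = algebraMap (RatFunc Fq) (RatFunc (RatFunc Fq))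
      (algebraMap (Polynomial Fq) (RatFunc Fq) (Polynomial.C (κ₂ : Fq))))
    (σ : RatFunc (RatFunc Fq) →+* RatFunc (RatFunc Fq))
    (hσt : σ RatFunc.X = RatFunc.X)
    (hσc : ∀ x : RatFunc Fq,
      σ (algebraMap (RatFunc Fq) (RatFunc (RatFunc Fq)) x)
        = algebraMap (RatFunc Fq) (RatFunc (RatFunc Fq)) (x ^ q))
    (B : ℤ → RatFunc (RatFunc Fq))
    (hBneg : ∀ m : ℤ, m < 0 → B m = 0)
    (hB0 : B 0 = 1)
    (hBrec : ∀ m : ℤ, 1 ≤ m →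
      B m = (k1 ^ q ^ (m - 1).toNat * B (m - 1) + k2 * B (m - 2)) /
        (t - θ' ^ q ^ m.toNat))
    (Ψ : ℤ → Matrix (Fin 2) (Fin 2) (RatFunc (RatFunc Fq)))
    (hΨ : ∀ j : ℤ, 1 ≤ j →
      Ψ j = !![k1 ^ q ^ (j - 1).toNat / (t - θ' ^ q ^ j.toNat),
               k2 / (t - θ' ^ q ^ j.toNat);
               1, 0])
    -- the products S_m = Sym²(Ψ_m) Sym²(Ψ_{m-1}) ⋯ Sym²(Ψ_1)
    (S : ℤ → Matrix (Fin 3) (Fin 3) (RatFunc (RatFunc Fq)))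
    (hS1 : S 1 = sym2Matrix (Ψ 1))
    (hSrec : ∀ m : ℤ, 1 ≤ m → S (m + 1) = sym2Matrix (Ψ (m + 1)) * S m) :
    ∀ m : ℤ, 1 ≤ m →
      S m = sym2Matrix
        !![B m, k2 * σ (B (m - 1)) / (t - θ' ^ q);
           B (m - 1), k2 * σ (B (m - 2)) / (t - θ' ^ q)] := by
  -- basic nonvanishing of the denominators
  have hne : ∀ r : RatFunc Fq, t - algebraMap (RatFunc Fq) (RatFunc (RatFunc Fq)) r ≠ 0 := by
    intro r h
    rw [sub_eq_zero, ht, RatFunc.algebraMap_eq_C] at h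
    have h2 := congrArg RatFunc.num h
    rw [RatFunc.num_X, RatFunc.num_C] at h2
    exact Polynomial.X_ne_C r h2
  have hd : ∀ n : ℕ, t - θ' ^ n ≠ 0 := by
    intro n
    rw [hθ', ← map_pow]
    exact hne _
  -- action of σ on the constants
  have hσt' : σ t = t := by rw [ht, hσt]
  have hσθ : σ θ' = θ' ^ q := by rw [hθ', hσc, map_pow]
  have hσk1 : σ k1 = k1 ^ q := by rw [hk1, hσc, map_pow]
  have hσk2 : σ k2 = k2 := by
    rw [hk2, hσc]
    congr 2
    rw [← map_pow, ← map_pow]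
    congr 1
    rw [hq, FiniteField.pow_card]
  -- the 2×2 product formula
  have key : ∀ n : ℤ, 1 ≤ n →
      Ψ (n + 1) * !![B n, k2 * σ (B (n - 1)) / (t - θ' ^ q);
                     B (n - 1), k2 * σ (B (n - 2)) / (t - θ' ^ q)]
        = !![B (n + 1), k2 * σ (B (n + 1 - 1)) / (t - θ' ^ q);
             B (n + 1 - 1), k2 * σ (B (n + 1 - 2)) / (t - θ' ^ q)] := by
    intro n hn
    have e1 : (n + 1 - 1 : ℤ) = n := by ring
    have e2 : (n + 1 - 2 : ℤ) = n - 1 := by ring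
    have e3 : (n + 1 - 1 : ℤ).toNat = n.toNat := by omega
    have e4 : (n + 1 : ℤ).toNat = n.toNat + 1 := by omega
    have e5 : (n - 1 : ℤ).toNat + 1 = n.toNat := by omega
    -- the recurrence for B (n+1)
    have hBs : B (n + 1) = (k1 ^ q ^ n.toNat * B n + k2 * B (n - 1))
        / (t - θ' ^ q ^ (n.toNat + 1)) := by
      rw [hBrec (n + 1) (by omega)]
      simp only [e1, e2, e3, e4]
    -- the σ-twisted recurrence for σ (B n)
    have hσB : σ (B n) = (k1 ^ q ^ n.toNat * σ (B (n - 1)) + k2 * σ (B (n - 2)))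
        / (t - θ' ^ q ^ (n.toNat + 1)) := by
      have h := congrArg σ (hBrec n hn)
      rw [map_div₀, map_add, _root_.map_mul, _root_.map_mul, map_pow, map_sub, map_pow,
        hσk1, hσk2, hσt', hσθ, ← pow_mul, ← pow_mul, ← pow_succ', ← pow_succ', e5] at h
      exact h
    rw [hΨ (n + 1) (by omega)]
    simp only [e1, e2, e3, e4]
    rw [hBs]
    ext i j
    fin_cases i <;> fin_cases j <;>
      simp only [Matrix.mul_apply, Fin.sum_univ_succ, Fin.sum_univ_zero,
        Matrix.cons_val', Matrix.cons_val_zero, Matrix.cons_val_one, Matrix.head_cons,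
        Matrix.cons_val_fin_one, Matrix.head_fin_const, Matrix.empty_val',
        Matrix.cons_val_succ, Fin.mk_one, Fin.isValue, Fin.succ_zero_eq_one,
        Matrix.of_apply, Fin.zero_eta] <;>
      (try rw [hσB]) <;> (try field_simp) <;> (try ring)
  -- main induction
  intro m hm
  refine Int.le_induction
      (motive := fun m _ => S m = sym2Matrix
        !![B m, k2 * σ (B (m - 1)) / (t - θ' ^ q);
           B (m - 1), k2 * σ (B (m - 2)) / (t - θ' ^ q)]) ?_ ?_ m hm
  · beta_reduce
    rw [hS1, hΨ 1 le_rfl]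
    have hB1 : B 1 = k1 / (t - θ' ^ q) := by
      rw [hBrec 1 le_rfl]
      norm_num [hB0, hBneg (-1) (by norm_num)]
    norm_num [hB1, hB0, hBneg (-1) (by norm_num), _root_.map_one, _root_.map_zero]
  · intro n hn ih
    beta_reduce
    beta_reduce at ih
    rw [hSrec n hn, ih, ← sym2Matrix_mul', key n hn]
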